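/- Let M be a Hilbert C*-module over the C*-algebra A = ℂ^{m×m} of m×m complex matrices, let ε ≥ 0, and let q̂ ∈ M satisfy ‖q̂‖ > ε. Then there exists b̂ ∈ ℂ^{m×m} with ‖b̂‖ < 1/ε (and b̂ arbitrary when ε = 0) such that q := q̂·b̂ is normalized, i.e., ⟨q,q⟩ is a nonzero idempotent; moreover there exists b ∈ ℂ^{m×m} such that ‖q̂ − q·b‖ ≤ ε. -/

import Mathlib

open scoped Matrix.Norms.L2Operator ComplexOrder

/-- A Hilbert C*-module over the C*-algebra `ℂ^{m×m}` of `m × m` complex matrices (with the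
operator norm): a right module with a matrix-valued inner product inducing the norm of `M`. -/
structure HilbertModuleMat (m : ℕ) (M : Type*) [NormedAddCommGroup M] where
  smul : M → Matrix (Fin m) (Fin m) ℂ → M
  inner : M → M → Matrix (Fin m) (Fin m) ℂ
  smul_add_vec : ∀ (u v : M) c, smul (u + v) c = smul u c + smul v c
  smul_add_alg : ∀ (u : M) c d, smul u (c + d) = smul u c + smul u d
  smul_mul : ∀ (u : M) c d, smul u (c * d) = smul (smul u c) d
  smul_one : ∀ u : M, smul u 1 = u
  inner_add_right : ∀ u v w : M, inner u (v + w) = inner u v + inner u w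
  inner_smul_right : ∀ (u v : M) c, inner u (smul v c) = inner u v * c
  inner_conj : ∀ u v : M, inner v u = star (inner u v)
  inner_self_posSemidef : ∀ u : M, (inner u u).PosSemidef
  inner_definite : ∀ u : M, inner u u = 0 → u = 0
  norm_eq : ∀ u : M, ‖u‖ = Real.sqrt ‖inner u u‖

/-- A vector `q` is *normalized* if `⟨q,q⟩` is a nonzero idempotent. -/
def HilbertModuleMat.Normalized {m : ℕ} {M : Type*} [NormedAddCommGroup M]
    (h : HilbertModuleMat m M) (q : M) : Prop :=
  h.inner q q ≠ 0 ∧ h.inner q q * h.inner q q = h.inner q q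

noncomputable instance matrixCStarAlgebra {m : ℕ} :
    CStarAlgebra (Matrix (Fin m) (Fin m) ℂ) := Matrix.instCStarAlgebra

/-- Normalization in a Hilbert C*-module over `ℂ^{m×m}`: if `‖q̂‖ > ε ≥ 0`, there is a matrix
`b̂` of norm `< 1/ε` (condition vacuous when `ε = 0`) such that `q := q̂·b̂` is normalized,
and a matrix `b` with `‖q̂ − q·b‖ ≤ ε`. -/
theorem exists_normalizer
    {m : ℕ} {M : Type*} [NormedAddCommGroup M] [CompleteSpace M]
    (h : HilbertModuleMat m M) (ε : ℝ) (hε : 0 ≤ ε) (qhat : M) (hq : ε < ‖qhat‖) :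
    ∃ bhat : Matrix (Fin m) (Fin m) ℂ,
      (ε ≠ 0 → ‖bhat‖ < 1 / ε) ∧
      h.Normalized (h.smul qhat bhat) ∧
      ∃ b : Matrix (Fin m) (Fin m) ℂ, ‖qhat - h.smul (h.smul qhat bhat) b‖ ≤ ε := by
  classical
  set A : Matrix (Fin m) (Fin m) ℂ := h.inner qhat qhat with hAdef
  have hA_psd : A.PosSemidef := h.inner_self_posSemidef qhat
  have hherm : A.IsHermitian := hA_psd.isHermitian
  have hA_sa : IsSelfAdjoint A := hherm
  -- the norm of A
  have hnormA : ‖qhat‖ ^ 2 = ‖A‖ := by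
    rw [h.norm_eq qhat, ← hAdef]
    exact Real.sq_sqrt (norm_nonneg _)
  have hεA : ε ^ 2 < ‖A‖ := by nlinarith
  -- m ≠ 0
  have hm : m ≠ 0 := by
    rintro rfl
    have hA0 : A = 0 := Subsingleton.elim _ _
    have hq0 : qhat = 0 := h.inner_definite _ hA0
    rw [hq0, norm_zero] at hq
    linarith
  haveI : Nonempty (Fin m) := ⟨⟨0, Nat.pos_of_ne_zero hm⟩⟩
  haveI : Nontrivial (Matrix (Fin m) (Fin m) ℂ) := inferInstance
  -- spectral facts
  have hspec_nonneg : ∀ x ∈ spectrum ℝ A, 0 ≤ x := by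
    intro x hx
    rw [Matrix.IsHermitian.spectrum_real_eq_range_eigenvalues hherm] at hx
    obtain ⟨i, rfl⟩ := hx
    exact hA_psd.eigenvalues_nonneg i
  have hnorm_mem : ‖A‖ ∈ spectrum ℝ A := by
    rcases CStarAlgebra.norm_or_neg_norm_mem_spectrum hA_sa with hmem | hmem
    · exact hmem
    · have h1 := hspec_nonneg _ hmem
      have h2 : 0 < ‖A‖ := lt_of_le_of_lt (sq_nonneg ε) hεA
      linarith
  -- the minimal spectral value above ε^2
  have hfin : ({x ∈ spectrum ℝ A | ε ^ 2 < x}).Finite :=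
    Matrix.finite_real_spectrum.subset (Set.sep_subset _ _)
  have hne : ({x ∈ spectrum ℝ A | ε ^ 2 < x}).Nonempty := ⟨‖A‖, hnorm_mem, hεA⟩
  obtain ⟨t, ⟨htmem, htgt⟩, htmin⟩ := Set.exists_min_image _ id hfin hne
  have ht0 : 0 < t := lt_of_le_of_lt (sq_nonneg ε) htgt
  have hts : 0 < Real.sqrt t := Real.sqrt_pos.mpr ht0
  -- the functions
  set f : ℝ → ℝ := fun x => if ε ^ 2 < x then (Real.sqrt x)⁻¹ else 0 with hfdef
  set k : ℝ → ℝ := fun x => if ε ^ 2 < x then Real.sqrt x else 0 with hkdef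
  have cts : ∀ F : ℝ → ℝ, ContinuousOn F (spectrum ℝ A) := by
    intro F
    rw [continuousOn_iff_continuous_restrict]; fun_prop
  have hfk : ∀ x, ε ^ 2 < x → 0 < x → f x * k x = 1 := by
    intro x hx hx0
    simp only [hfdef, hkdef, if_pos hx]
    exact inv_mul_cancel₀ (ne_of_gt (Real.sqrt_pos.mpr hx0))
  have hfxf : ∀ x, ε ^ 2 < x → 0 < x → f x * x * f x = 1 := by
    intro x hx hx0
    have hsq : Real.sqrt x ≠ 0 := ne_of_gt (Real.sqrt_pos.mpr hx0)
    simp only [hfdef, if_pos hx]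
    field_simp
    rw [Real.sq_sqrt hx0.le]
  -- inner-product algebra helpers
  have inner_smul_left : ∀ (u v : M) c, h.inner (h.smul u c) v = star c * h.inner u v := by
    intro u v c
    rw [h.inner_conj v (h.smul u c), h.inner_smul_right, star_mul, h.inner_conj u v, star_star]
  have inner_sub_right : ∀ (u v w : M), h.inner u (v - w) = h.inner u v - h.inner u w := by
    intro u v w
    have h1 := h.inner_add_right u (v - w) w
    rw [sub_add_cancel] at h1
    rw [h1, add_sub_cancel_right]
  have inner_sub_left : ∀ (u v w : M), h.inner (u - v) w = h.inner u w - h.inner v w := by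
    intro u v w
    rw [h.inner_conj w (u - v), inner_sub_right, star_sub, h.inner_conj u w, h.inner_conj v w,
      star_star, star_star]
  have inner_smul_smul : ∀ c d, h.inner (h.smul qhat c) (h.smul qhat d) = star c * A * d := by
    intro c d
    rw [h.inner_smul_right, inner_smul_left, ← hAdef]
  -- the inner product of q with itself
  have hbsa : star (cfc f A) = cfc f A :=
    (cfc_predicate f A : IsSelfAdjoint (cfc f A)).star_eq
  have hG : h.inner (h.smul qhat (cfc f A)) (h.smul qhat (cfc f A))
      = cfc (fun x => f x * x * f x) A := by
    rw [inner_smul_smul, hbsa]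
    have e1 : cfc (fun x => f x * x * f x) A
        = cfc (fun x => f x * x) A * cfc f A := cfc_mul _ f A (cts _) (cts _)
    have e2 : cfc (fun x => f x * x) A = cfc f A * A := by
      have := cfc_mul f (fun x : ℝ => x) A (cts _) (cts _)
      rwa [cfc_id' ℝ A hA_sa] at this
    rw [e1, e2]
  refine ⟨cfc f A, ?_, ?_, ?_⟩
  · -- norm bound
    intro hε0
    have hεpos : 0 < ε := lt_of_le_of_ne hε (Ne.symm hε0)
    have hb : ‖cfc f A‖ ≤ (Real.sqrt t)⁻¹ := by
      refine norm_cfc_le (by positivity) fun x hx => ?_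
      by_cases hc : ε ^ 2 < x
      · have hx0 : 0 < x := lt_of_le_of_lt (sq_nonneg ε) hc
        simp only [hfdef, if_pos hc, Real.norm_eq_abs]
        rw [abs_of_nonneg (by positivity)]
        have h1 : Real.sqrt t ≤ Real.sqrt x := Real.sqrt_le_sqrt (htmin x ⟨hx, hc⟩)
        exact inv_anti₀ hts h1
      · simp only [hfdef, if_neg hc, norm_zero]
        positivity
    have hεt : ε < Real.sqrt t := by
      have := Real.sqrt_lt_sqrt (sq_nonneg ε) htgt
      rwa [Real.sqrt_sq hε] at this
    have : (Real.sqrt t)⁻¹ < ε⁻¹ := by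
      exact inv_strictAnti₀ hεpos hεt
    rw [one_div]
    exact lt_of_le_of_lt hb this
  · -- normalized
    constructor
    · intro h0
      rw [hG] at h0
      have hmem1 : (1 : ℝ) ∈ spectrum ℝ (cfc (fun x => f x * x * f x) A) := by
        rw [cfc_map_spectrum (f := fun x => f x * x * f x) (a := A) hA_sa (cts _)]
        refine ⟨‖A‖, hnorm_mem, ?_⟩
        exact hfxf _ hεA (lt_of_le_of_lt (sq_nonneg ε) hεA)
      rw [h0, spectrum.zero_eq] at hmem1
      exact one_ne_zero (Set.mem_singleton_iff.mp hmem1)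
    · rw [hG, ← cfc_mul _ _ A (cts _) (cts _)]
      refine cfc_congr fun x hx => ?_
      by_cases hc : ε ^ 2 < x
      · have hx0 : 0 < x := lt_of_le_of_lt (sq_nonneg ε) hc
        show (f x * x * f x) * (f x * x * f x) = f x * x * f x
        rw [hfxf x hc hx0]; norm_num
      · show (f x * x * f x) * (f x * x * f x) = f x * x * f x
        simp [hfdef, if_neg hc]
  · -- approximation
    refine ⟨cfc k A, ?_⟩
    set P : Matrix (Fin m) (Fin m) ℂ := cfc (fun x => f x * k x) A with hPdef
    have hPmul : cfc f A * cfc k A = P := (cfc_mul f k A (cts _) (cts _)).symm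
    have hPsa : star P = P := (cfc_predicate _ A : IsSelfAdjoint P).star_eq
    have hsm : h.smul (h.smul qhat (cfc f A)) (cfc k A) = h.smul qhat P := by
      rw [← h.smul_mul, hPmul]
    -- inner product of the remainder
    have expand : h.inner (qhat - h.smul qhat P) (qhat - h.smul qhat P)
        = A - A * P - (P * A - P * A * P) := by
      rw [inner_sub_left, inner_sub_right, inner_sub_right, h.inner_smul_right,
        inner_smul_left, inner_smul_smul, hPsa, ← hAdef]
    -- identify with a cfc
    have m2 : cfc (fun x => (f x * k x) * x) A = P * A := by
      have := cfc_mul (fun x => f x * k x) (fun x : ℝ => x) A (cts _) (cts _)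
      rwa [cfc_id' ℝ A hA_sa, ← hPdef] at this
    have m1 : cfc (fun x => x * (f x * k x)) A = A * P := by
      have := cfc_mul (fun x : ℝ => x) (fun x => f x * k x) A (cts _) (cts _)
      rwa [cfc_id' ℝ A hA_sa, ← hPdef] at this
    have m3 : cfc (fun x => (f x * k x) * x * (f x * k x)) A = P * A * P := by
      have := cfc_mul (fun x => (f x * k x) * x) (fun x => f x * k x) A (cts _) (cts _)
      rwa [m2, ← hPdef] at this
    have hEc : cfc (fun x => x - x * (f x * k x) - ((f x * k x) * x - (f x * k x) * x * (f x * k x))) A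
        = A - A * P - (P * A - P * A * P) := by
      rw [cfc_sub (fun x => x - x * (f x * k x))
        (fun x => (f x * k x) * x - (f x * k x) * x * (f x * k x)) A (cts _) (cts _),
        cfc_sub (fun x : ℝ => x) (fun x => x * (f x * k x)) A (cts _) (cts _),
        cfc_sub (fun x => (f x * k x) * x) (fun x => (f x * k x) * x * (f x * k x)) A
          (cts _) (cts _),
        cfc_id' ℝ A hA_sa, m1, m2, m3]
    have hbound : ‖A - A * P - (P * A - P * A * P)‖ ≤ ε ^ 2 := by
      rw [← hEc]
      refine norm_cfc_le (sq_nonneg ε) fun x hx => ?_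
      by_cases hc : ε ^ 2 < x
      · have hx0 : 0 < x := lt_of_le_of_lt (sq_nonneg ε) hc
        rw [hfk x hc hx0]
        simp only [mul_one, one_mul, sub_self, sub_zero, norm_zero]
        positivity
      · have hf0 : f x = 0 := if_neg hc
        rw [hf0]
        simp only [zero_mul, mul_zero, sub_zero, zero_sub, neg_zero, sub_zero, Real.norm_eq_abs]
        rw [abs_of_nonneg (hspec_nonneg x hx)]
        exact le_of_not_gt hc
    rw [hsm, h.norm_eq, expand]
    calc Real.sqrt ‖A - A * P - (P * A - P * A * P)‖
        ≤ Real.sqrt (ε ^ 2) := Real.sqrt_le_sqrt hbound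
      _ = ε := Real.sqrt_sq hε
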